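/- For every unbounded modulus function f and weight function g, and every arithmetic sequence (a_n), the subgroup t^{f,g}_{(a_n)}(𝕋) has cardinality 𝔠 (the continuum). -/

import Mathlib

open Filter Set

/-- A modulus function: nonnegative, vanishing exactly at 0, subadditive,
non-decreasing, right continuous at 0 (all on `[0,∞)`). -/
def IsModulus (f : ℝ → ℝ) : Prop :=
  (∀ x : ℝ, 0 ≤ x → 0 ≤ f x) ∧
  (∀ x : ℝ, 0 ≤ x → (f x = 0 ↔ x = 0)) ∧
  (∀ x y : ℝ, 0 ≤ x → 0 ≤ y → f (x + y) ≤ f x + f y) ∧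
  (∀ x y : ℝ, 0 ≤ x → x ≤ y → f x ≤ f y) ∧
  ContinuousWithinAt f (Set.Ici 0) 0

/-- An unbounded modulus function. -/
def IsUnboundedModulus (f : ℝ → ℝ) : Prop :=
  IsModulus f ∧ Tendsto f atTop atTop

/-- A weight function `g : ℕ → [0,∞)` with `g n → ∞` and `n / g n ↛ 0`. -/
def IsWeight (g : ℕ → ℝ) : Prop :=
  (∀ n, 0 ≤ g n) ∧ Tendsto g atTop atTop ∧
  ¬ Tendsto (fun n : ℕ => (n : ℝ) / g n) atTop (nhds 0)

open scoped Classical in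
/-- `|A ∩ [1,n]|`. -/
noncomputable def cnt (A : Set ℕ) (n : ℕ) : ℕ :=
  ((Finset.Icc 1 n).filter (fun m => m ∈ A)).card

/-- The ideal `𝒵_g(f)` of sets whose `f`-density of weight `g` is zero
(for nonnegative sequences, `limsup = 0` is equivalent to convergence to `0`). -/
noncomputable def Zd (f : ℝ → ℝ) (g : ℕ → ℝ) : Set (Set ℕ) :=
  {A | Tendsto (fun n => f (cnt A n) / f (g n)) atTop (nhds 0)}

/-- The `f^g`-statistically characterized subgroup `t^{f,g}_{(a_n)}(𝕋)`. -/
noncomputable def statChar (f : ℝ → ℝ) (g : ℕ → ℝ) (a : ℕ → ℤ) :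
    Set (AddCircle (1 : ℝ)) :=
  {x | ∀ ε > 0, {n : ℕ | ε ≤ ‖(a n) • x‖} ∈ Zd f g}

/-- An arithmetic sequence: `a 0 = 1`, strictly increasing, `a n ∣ a (n+1)`,
and all ratios `q_n ≥ 2`. -/
def IsArith (a : ℕ → ℕ) : Prop :=
  a 0 = 1 ∧ StrictMono a ∧ (∀ n, a n ∣ a (n + 1)) ∧ (∀ n, 2 * a n ≤ a (n + 1))

/-- Canonical representation `x = Σ_{n≥1} c_n / a_n` with `0 ≤ c_n ≤ q_n - 1`
and `c_n < q_n - 1` infinitely often; here `q_n = a n / a (n-1)`. -/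
def IsCanonRep (a : ℕ → ℕ) (c : ℕ → ℕ) (x : AddCircle (1 : ℝ)) : Prop :=
  c 0 = 0 ∧ (∀ n, 1 ≤ n → c n ≤ a n / a (n - 1) - 1) ∧
  (∀ N, ∃ n, N ≤ n ∧ c n < a n / a (n - 1) - 1) ∧
  x = ((∑' n, (c n : ℝ) / (a n : ℝ) : ℝ) : AddCircle (1 : ℝ))

/-- bundle of hypotheses on the pair of sequences -/
structure Good (a k : ℕ → ℕ) : Prop where
  apos : ∀ n, 0 < a n
  apow : ∀ n, 2 ^ n ≤ a n
  advd : ∀ i j : ℕ, i ≤ j → a i ∣ a j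
  aratio : ∀ i j : ℕ, i ≤ j → 2 ^ (j - i) * a i ≤ a j
  k0 : 2 ≤ k 0
  kgap : ∀ m, k m + m + 3 ≤ k (m + 1)

namespace Good

variable {a k : ℕ → ℕ}

lemma kmono (h : Good a k) : StrictMono k :=
  strictMono_nat_of_lt_succ fun n => by have := h.kgap n; omega

lemma kid (h : Good a k) (m : ℕ) : m ≤ k m := h.kmono.le_apply

lemma kadd (h : Good a k) (i d : ℕ) : k i + d ≤ k (i + d) := by
  induction d with
  | zero => simp
  | succ d ih =>
    have h2 := h.kgap (i + d)
    rw [show i + (d + 1) = (i + d) + 1 from rfl]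
    omega

end Good

open scoped Classical in
/-- the `m`-th term of the series defining `x_S` -/
noncomputable def tm (a k : ℕ → ℕ) (S : Set ℕ) (m : ℕ) : ℝ :=
  if m ∈ S then ((a (k m) : ℝ))⁻¹ else 0

/-- the real number `x_S` -/
noncomputable def xv (a k : ℕ → ℕ) (S : Set ℕ) : ℝ := ∑' m, tm a k S m

section tmlem

variable {a k : ℕ → ℕ}

lemma tm_nonneg (S : Set ℕ) (m : ℕ) : 0 ≤ tm a k S m := by
  unfold tm; split
  · positivity
  · exact le_rfl

lemma tm_le_inv (S : Set ℕ) (m : ℕ) : tm a k S m ≤ ((a (k m) : ℝ))⁻¹ := by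
  unfold tm; split
  · exact le_rfl
  · positivity

lemma inv_a_le (h : Good a k) (m : ℕ) : ((a (k m) : ℝ))⁻¹ ≤ (1 / 2 : ℝ) ^ (k m) := by
  rw [one_div, inv_pow]
  apply inv_anti₀ (by positivity)
  exact_mod_cast h.apow (k m)

lemma tm_le (h : Good a k) (S : Set ℕ) (m : ℕ) : tm a k S m ≤ (1 / 2 : ℝ) ^ (k m) := by
  unfold tm; split
  · exact inv_a_le h m
  · positivity

lemma tm_le' (h : Good a k) (S : Set ℕ) (m : ℕ) : tm a k S m ≤ (1 / 2 : ℝ) ^ m :=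
  (tm_le h S m).trans (pow_le_pow_of_le_one (by norm_num) (by norm_num) (h.kid m))

lemma summable_tm (h : Good a k) (S : Set ℕ) : Summable (tm a k S) :=
  Summable.of_nonneg_of_le (tm_nonneg S) (tm_le' h S)
    (summable_geometric_of_lt_one (r := (1/2:ℝ)) (by norm_num) (by norm_num))

lemma xv_nonneg (S : Set ℕ) : 0 ≤ xv a k S := tsum_nonneg (tm_nonneg S)

lemma xv_le_half (h : Good a k) (S : Set ℕ) : xv a k S ≤ 1 / 2 := by
  have h1 : ∀ m, tm a k S m ≤ (1 / 2 : ℝ) ^ (k 0) * (1 / 2 : ℝ) ^ m := by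
    intro m
    refine (tm_le h S m).trans ?_
    rw [← pow_add]
    have := h.kadd 0 m
    rw [Nat.zero_add] at this
    exact pow_le_pow_of_le_one (by norm_num) (by norm_num) this
  have h2 : xv a k S ≤ ∑' m : ℕ, (1 / 2 : ℝ) ^ (k 0) * (1 / 2 : ℝ) ^ m := by
    refine Summable.tsum_le_tsum h1 (summable_tm h S) ?_
    exact (summable_geometric_of_lt_one (r := (1/2:ℝ)) (by norm_num) (by norm_num)).mul_left _
  rw [tsum_mul_left, tsum_geometric_two] at h2
  refine h2.trans ?_
  have : (1 / 2 : ℝ) ^ (k 0) ≤ (1 / 2 : ℝ) ^ 2 :=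
    pow_le_pow_of_le_one (by norm_num) (by norm_num) h.k0
  nlinarith

end tmlem
section normbound

open scoped Classical

variable {a k : ℕ → ℕ}

lemma term_ratio_le (h : Good a k) (S : Set ℕ) {n m : ℕ} (hm : n ≤ k m) :
    (a n : ℝ) * tm a k S m ≤ (1 / 2 : ℝ) ^ (k m - n) := by
  have hb : (0:ℝ) < (a (k m) : ℝ) := by exact_mod_cast h.apos (k m)
  have han : (0:ℝ) < (a n : ℝ) := by exact_mod_cast h.apos n
  have hr : (2:ℝ) ^ (k m - n) * (a n : ℝ) ≤ (a (k m) : ℝ) := by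
    exact_mod_cast h.aratio n (k m) hm
  have key : (a n : ℝ) * ((a (k m) : ℝ))⁻¹ ≤ (1 / 2 : ℝ) ^ (k m - n) := by
    rw [div_pow, one_pow, ← div_eq_mul_inv, div_le_div_iff₀ hb (by positivity)]
    nlinarith [pow_pos (show (0:ℝ) < 2 by norm_num) (k m - n)]
  unfold tm; split
  · exact key
  · rw [mul_zero]; positivity

lemma mynorm_smul_le (h : Good a k) (S : Set ℕ) (n L : ℕ) (hL : 2 ≤ L)
    (hfar : ∀ m, n < k m → n + L + 1 ≤ k m) :
    ‖((a n : ℤ)) • (((xv a k S : ℝ)) : AddCircle (1:ℝ))‖ ≤ (1 / 2 : ℝ) ^ L := by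
  set u : ℕ → ℝ := fun m => (a n : ℝ) * tm a k S m with hu
  have hsum : Summable u := (summable_tm h S).mul_left _
  set F : Finset ℕ := (Finset.range (n + 1)).filter (fun m => k m ≤ n) with hF
  have hsplit := Summable.sum_add_tsum_compl (s := F) hsum
  -- the finite part is a natural number
  set z : ℕ := ∑ m ∈ F, (if m ∈ S then a n / a (k m) else 0) with hz
  have hzeq : (∑ m ∈ F, u m) = (z : ℝ) := by
    rw [hz, Nat.cast_sum]
    refine Finset.sum_congr rfl (fun m hm => ?_)
    have hkm : k m ≤ n := by
      simp only [hF, Finset.mem_filter] at hm; exact hm.2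
    have hdvd : a (k m) ∣ a n := h.advd (k m) n hkm
    have hb : ((a (k m) : ℝ)) ≠ 0 := by
      have := h.apos (k m); positivity
    simp only [hu, tm]
    split
    · rw [Nat.cast_div hdvd hb, div_eq_mul_inv]
    · simp
  -- membership in the complement means `k m > n`
  have hcompl : ∀ m : ℕ, m ∈ (↑F : Set ℕ)ᶜ → n + L + 1 ≤ k m := by
    intro m hm
    apply hfar
    by_contra hc
    push_neg at hc
    apply hm
    simp only [hF, Finset.coe_filter, Set.mem_setOf_eq, Finset.mem_range]
    exact ⟨by have := h.kid m; omega, by omega⟩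
  -- bound the tail
  set T : ℝ := ∑' (m : ↑((↑F : Set ℕ)ᶜ)), u ↑m with hT
  have hT0 : 0 ≤ T := tsum_nonneg (fun m => by
    have h0 := tm_nonneg (a := a) (k := k) S (m : ℕ)
    have han : (0:ℝ) ≤ (a n : ℝ) := by positivity
    exact mul_nonneg han h0)
  have hTle : T ≤ (1 / 2 : ℝ) ^ L := by
    have hgsum : Summable (fun i : ℕ => (1/2 : ℝ) ^ (L+1) * (1/2 : ℝ) ^ i) :=
      (summable_geometric_of_lt_one (r := (1/2:ℝ)) (by norm_num) (by norm_num)).mul_left _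
    have := Summable.tsum_le_tsum_of_inj (f := fun m : ↑((↑F : Set ℕ)ᶜ) => u ↑m)
      (g := fun i : ℕ => (1/2 : ℝ) ^ (L+1) * (1/2 : ℝ) ^ i)
      (fun m => k (m : ℕ) - (n + L + 1))
      (by
        intro m1 m2 h12
        simp only at h12
        have h1 := hcompl _ m1.2
        have h2 := hcompl _ m2.2
        have hkk : k (m1 : ℕ) = k (m2 : ℕ) := by omega
        exact Subtype.ext (h.kmono.injective hkk))
      (by intro c _; positivity)
      (by
        intro m
        have hge := hcompl _ m.2
        have h1 : (a n : ℝ) * tm a k S (m : ℕ) ≤ (1/2 : ℝ) ^ (k (m:ℕ) - n) :=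
          term_ratio_le h S (by omega)
        show (a n : ℝ) * tm a k S (m : ℕ) ≤ (1/2 : ℝ) ^ (L+1) * (1/2 : ℝ) ^ (k (m:ℕ) - (n + L + 1))
        refine h1.trans ?_
        rw [← pow_add]
        apply le_of_eq
        congr 1
        omega)
      (hsum.subtype _) hgsum
    have hg2 : ∑' (i : ℕ), (1/2 : ℝ) ^ (L+1) * (1/2 : ℝ) ^ i = (1/2 : ℝ) ^ L := by
      rw [tsum_mul_left, tsum_geometric_two, pow_succ]
      ring
    exact this.trans_eq hg2
  -- identify the AddCircle element
  have hxv : (a n : ℝ) * xv a k S = (z : ℝ) + T := by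
    rw [xv, ← tsum_mul_left]
    rw [← hsplit, hzeq]
  have hcast : ((a n : ℤ)) • (((xv a k S : ℝ)) : AddCircle (1:ℝ))
      = ((T : ℝ) : AddCircle (1:ℝ)) := by
    rw [← QuotientAddGroup.mk_zsmul]
    have h1 : (a n : ℤ) • (xv a k S : ℝ) = (z : ℝ) + T := by
      rw [zsmul_eq_mul]; push_cast; exact_mod_cast hxv
    rw [h1, QuotientAddGroup.mk_add]
    have h2 : (((z : ℝ)) : AddCircle (1:ℝ)) = 0 := by
      rw [AddCircle.coe_eq_zero_iff]
      exact ⟨(z : ℤ), by simp⟩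
    rw [h2, zero_add]
  rw [hcast]
  have hT4 : T ≤ 1/4 := hTle.trans (by
    calc (1/2:ℝ)^L ≤ (1/2:ℝ)^2 := pow_le_pow_of_le_one (by norm_num) (by norm_num) hL
    _ = 1/4 := by norm_num)
  have hnorm : ‖((T : ℝ) : AddCircle (1:ℝ))‖ = |T - round T| := by
    rw [AddCircle.norm_eq]
    norm_num
  rw [hnorm]
  have hr0 : round T = 0 := by
    rw [round_eq_zero_iff]
    constructor <;> [linarith; skip]
    linarith
  rw [hr0]
  simpa [abs_of_nonneg hT0] using hTle

end normbound
section counting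

open scoped Classical

variable {a k : ℕ → ℕ}

lemma cnt_mono {A B : Set ℕ} (hAB : A ⊆ B) (n : ℕ) : cnt A n ≤ cnt B n := by
  unfold cnt
  apply Finset.card_le_card
  intro x hx
  simp only [Finset.mem_filter] at hx ⊢
  exact ⟨hx.1, hAB hx.2⟩

lemma cnt_BL_le (h : Good a k) (L m n : ℕ) (hLm : L ≤ m) (hn : n < k (m + 1)) :
    cnt {n' | ∃ j, n' < k j ∧ k j ≤ n' + L} n ≤ (m + 2) * (L + 1) := by
  unfold cnt
  have hsub : (Finset.Icc 1 n).filter (fun m' => m' ∈ {n' | ∃ j, n' < k j ∧ k j ≤ n' + L})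
      ⊆ (Finset.range (m + 2)).biUnion (fun j => Finset.Icc (k j - L) (k j)) := by
    intro x hx
    simp only [Finset.mem_filter, Finset.mem_Icc, Set.mem_setOf_eq] at hx
    obtain ⟨⟨hx1, hxn⟩, j, hj1, hj2⟩ := hx
    simp only [Finset.mem_biUnion, Finset.mem_range, Finset.mem_Icc]
    refine ⟨j, ?_, by omega, by omega⟩
    by_contra hc
    push_neg at hc
    have h1 : k (m + 1) + (m + 1) + 3 ≤ k (m + 2) := h.kgap (m + 1)
    have h2 : k (m + 2) ≤ k j := h.kmono.monotone hc
    omega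
  calc ((Finset.Icc 1 n).filter _).card
      ≤ ((Finset.range (m + 2)).biUnion (fun j => Finset.Icc (k j - L) (k j))).card :=
        Finset.card_le_card hsub
    _ ≤ ∑ j ∈ Finset.range (m + 2), (Finset.Icc (k j - L) (k j)).card :=
        Finset.card_biUnion_le
    _ ≤ ∑ _j ∈ Finset.range (m + 2), (L + 1) := by
        apply Finset.sum_le_sum
        intro j _
        rw [Nat.card_Icc]
        omega
    _ = (m + 2) * (L + 1) := by
        rw [Finset.sum_const, Finset.card_range, smul_eq_mul]

/-- greatest `m` with `k m ≤ n` -/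
noncomputable def mfun (k : ℕ → ℕ) (n : ℕ) : ℕ := Nat.findGreatest (fun m => k m ≤ n) n

lemma mfun_ge (h : Good a k) {j n : ℕ} (hn : k j ≤ n) : j ≤ mfun k n :=
  Nat.le_findGreatest (le_trans (h.kid j) hn) hn

lemma mfun_le (h : Good a k) {n : ℕ} (hn : k 0 ≤ n) : k (mfun k n) ≤ n :=
  Nat.findGreatest_spec (P := fun m => k m ≤ n) (m := 0) (Nat.zero_le n) hn

lemma mfun_lt (h : Good a k) (n : ℕ) : n < k (mfun k n + 1) := by
  rcases le_or_gt (mfun k n + 1) n with hle | hlt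
  · have h2 := Nat.findGreatest_is_greatest (P := fun m => k m ≤ n) (n := n)
      (k := mfun k n + 1) (Nat.lt_succ_self _) hle
    omega
  · exact lt_of_lt_of_le hlt (h.kid _)

lemma mfun_tendsto (h : Good a k) : Tendsto (mfun k) atTop atTop := by
  rw [tendsto_atTop]
  intro b
  rw [eventually_atTop]
  exact ⟨k b, fun n hn => mfun_ge h hn⟩

end counting
section membership

open scoped Classical

lemma mem_statChar_xv (f : ℝ → ℝ) (hf : IsUnboundedModulus f) (g : ℕ → ℝ) (hg : IsWeight g)
    {a k : ℕ → ℕ} (h : Good a k)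
    (hcond : ∀ m n : ℕ, k m ≤ n → (m : ℝ) * f ((((m + 2) ^ 2 : ℕ)) : ℝ) ≤ f (g n))
    (S : Set ℕ) :
    ((xv a k S : ℝ) : AddCircle (1:ℝ)) ∈ statChar f g (fun n => (a n : ℤ)) := by
  intro ε hε
  obtain ⟨L0, hL0⟩ := exists_pow_lt_of_lt_one hε (show (1/2:ℝ) < 1 by norm_num)
  set L := max L0 2 with hLdef
  have hL2 : 2 ≤ L := le_max_right _ _
  have hLe : (1/2:ℝ) ^ L < ε :=
    lt_of_le_of_lt (pow_le_pow_of_le_one (by norm_num) (by norm_num) (le_max_left _ _)) hL0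
  set B : Set ℕ := {n : ℕ | ε ≤ ‖((a n : ℤ)) • ((xv a k S : ℝ) : AddCircle (1:ℝ))‖} with hB
  set BL : Set ℕ := {n' | ∃ j, n' < k j ∧ k j ≤ n' + L} with hBL
  have hBsub : B ⊆ BL := by
    intro n hn
    by_contra hc
    simp only [hBL, Set.mem_setOf_eq, not_exists, not_and, not_le] at hc
    have hfar : ∀ m, n < k m → n + L + 1 ≤ k m := fun m hm => hc m hm
    have := mynorm_smul_le h S n L hL2 hfar
    rw [hB, Set.mem_setOf_eq] at hn
    linarith
  show Tendsto (fun n => f (cnt B n) / f (g n)) atTop (nhds 0)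
  have hmono := hf.1.2.2.2.1
  have hnonneg := hf.1.1
  have hiff := hf.1.2.1
  apply tendsto_of_tendsto_of_tendsto_of_le_of_le'
    (tendsto_const_nhds : Tendsto (fun _ : ℕ => (0:ℝ)) atTop (nhds 0))
    (tendsto_one_div_atTop_nhds_zero_nat.comp (mfun_tendsto h))
  · filter_upwards with n
    exact div_nonneg (hnonneg _ (Nat.cast_nonneg _)) (hnonneg _ (hg.1 n))
  · rw [eventually_atTop]
    refine ⟨k L, fun n hn => ?_⟩
    set m := mfun k n with hm
    have hmL : L ≤ m := mfun_ge h hn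
    have hm2 : k m ≤ n := mfun_le h (le_trans (h.kmono.monotone (Nat.zero_le L)) hn)
    have hm3 : n < k (m + 1) := mfun_lt h n
    have hc1 : cnt B n ≤ cnt BL n := cnt_mono hBsub n
    have hc2 : cnt BL n ≤ (m + 2) * (L + 1) := cnt_BL_le h L m n hmL hm3
    have hc3 : (m + 2) * (L + 1) ≤ (m + 2) ^ 2 := by nlinarith
    set big : ℝ := (((m + 2) ^ 2 : ℕ) : ℝ) with hbig
    have hbig0 : (0:ℝ) ≤ big := Nat.cast_nonneg _
    have hfc : f (cnt B n) ≤ f big := by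
      apply hmono _ _ (Nat.cast_nonneg _)
      rw [hbig]
      exact_mod_cast le_trans hc1 (le_trans hc2 hc3)
    have hne : f big ≠ 0 := by
      intro e
      have := (hiff big hbig0).mp e
      rw [hbig] at this
      have h0 : ((m + 2) ^ 2 : ℕ) = 0 := by exact_mod_cast this
      have hp : 0 < ((m + 2) ^ 2 : ℕ) := pow_pos (by omega) 2
      omega
    have hbigpos : 0 < f big := lt_of_le_of_ne (hnonneg big hbig0) (Ne.symm hne)
    have hfg2 : (m : ℝ) * f big ≤ f (g n) := hcond m n hm2
    have hmpos : (0:ℝ) < (m : ℝ) := by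
      have : 0 < m := by omega
      exact_mod_cast this
    have hfgpos : (0:ℝ) < (m : ℝ) * f big := mul_pos hmpos hbigpos
    have hmain : f (cnt B n) / f (g n) ≤ f big / ((m : ℝ) * f big) :=
      div_le_div₀ (le_of_lt hbigpos) hfc hfgpos hfg2
    have heq : f big / ((m : ℝ) * f big) = 1 / (m : ℝ) := by
      rw [mul_comm, div_mul_eq_div_div, div_self hne]
    calc f (cnt B n) / f (g n) ≤ f big / ((m : ℝ) * f big) := hmain
      _ = 1 / (m : ℝ) := heq
      _ = (fun j : ℕ => 1 / (j : ℝ)) (mfun k n) := by rw [hm]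


end membership
section injectivity

open scoped Classical

variable {a k : ℕ → ℕ}

lemma inv_ratio_le (h : Good a k) {i j : ℕ} (hij : i ≤ j) :
    ((a (k j) : ℝ))⁻¹ ≤ (1/2 : ℝ) ^ (k j - k i) * ((a (k i) : ℝ))⁻¹ := by
  have hki : k i ≤ k j := h.kmono.monotone hij
  have hA : (0:ℝ) < (a (k i) : ℝ) := by exact_mod_cast h.apos (k i)
  have hB : (0:ℝ) < (a (k j) : ℝ) := by exact_mod_cast h.apos (k j)
  have hr : (2:ℝ) ^ (k j - k i) * (a (k i) : ℝ) ≤ (a (k j) : ℝ) := by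
    exact_mod_cast h.aratio (k i) (k j) hki
  have h2 : ((a (k j) : ℝ))⁻¹ ≤ ((2:ℝ) ^ (k j - k i) * (a (k i) : ℝ))⁻¹ :=
    inv_anti₀ (by positivity) hr
  refine h2.trans (le_of_eq ?_)
  rw [mul_inv, div_pow, one_pow, inv_eq_one_div]

lemma xv_real_injective (h : Good a k) {S S' : Set ℕ} (hne : S ≠ S') :
    xv a k S ≠ xv a k S' := by
  intro hxeq
  -- minimal index where they differ
  have hP : ∃ m, ¬(m ∈ S ↔ m ∈ S') := by
    by_contra hc
    push_neg at hc
    exact hne (Set.ext fun m => hc m)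
  set m0 := Nat.find hP with hm0def
  have hm0 := Nat.find_spec hP
  have hmin : ∀ j, j < m0 → (j ∈ S ↔ j ∈ S') := fun j hj => not_not.mp (Nat.find_min hP hj)
  set D : ℕ → ℝ := fun j => tm a k S j - tm a k S' j with hD
  have hDsum : Summable D := (summable_tm h S).sub (summable_tm h S')
  have htsum : ∑' j, D j = 0 := by
    rw [hD, Summable.tsum_sub (summable_tm h S) (summable_tm h S')]
    rw [show ∑' j, tm a k S j = xv a k S from rfl, show ∑' j, tm a k S' j = xv a k S' from rfl,
      hxeq, sub_self]
  set F : Finset ℕ := Finset.range (m0 + 1) with hF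
  have hsplit := Summable.sum_add_tsum_compl (s := F) hDsum
  have hsum0 : ∑ j ∈ F, D j = D m0 := by
    rw [hF, Finset.sum_range_succ]
    have : ∑ j ∈ Finset.range m0, D j = 0 := by
      apply Finset.sum_eq_zero
      intro j hj
      rw [Finset.mem_range] at hj
      have hiff := hmin j hj
      simp only [hD, tm]
      by_cases hjS : j ∈ S
      · rw [if_pos hjS, if_pos (hiff.mp hjS), sub_self]
      · rw [if_neg hjS, if_neg (fun hc => hjS (hiff.mpr hc)), sub_self]
    rw [this, zero_add]
  set R : ℝ := ∑' (j : ↑((↑F : Set ℕ)ᶜ)), D ↑j with hR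
  have hDm0 : |D m0| = ((a (k m0) : ℝ))⁻¹ := by
    have hpos : (0:ℝ) < ((a (k m0) : ℝ))⁻¹ := by
      have := h.apos (k m0); positivity
    simp only [hD, tm]
    by_cases h1 : m0 ∈ S <;> by_cases h2 : m0 ∈ S'
    · exact absurd (iff_of_true h1 h2) hm0
    · rw [if_pos h1, if_neg h2, sub_zero, abs_of_pos hpos]
    · rw [if_neg h1, if_pos h2, zero_sub, abs_neg, abs_of_pos hpos]
    · exact absurd (iff_of_false h1 h2) hm0
  -- bound the tail R
  have hRle : |R| ≤ (1/2 : ℝ) * ((a (k m0) : ℝ))⁻¹ := by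
    have habs : |R| ≤ ∑' (j : ↑((↑F : Set ℕ)ᶜ)), |D ↑j| := by
      rw [hR, ← Real.norm_eq_abs]
      refine (norm_tsum_le_tsum_norm ?_).trans (le_of_eq ?_)
      · exact (hDsum.abs.subtype _)
      · congr 1
    refine habs.trans ?_
    have hgsum : Summable (fun i : ℕ =>
        (1/2 : ℝ) ^ (m0 + 3) * ((a (k m0) : ℝ))⁻¹ * (1/2 : ℝ) ^ i) :=
      (summable_geometric_of_lt_one (r := (1/2:ℝ)) (by norm_num) (by norm_num)).mul_left _
    have hcompl : ∀ j : ℕ, j ∈ ((↑F : Set ℕ)ᶜ) → m0 + 1 ≤ j := by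
      intro j hj
      by_contra hc
      exact hj (by simp [hF, Finset.coe_range]; omega)
    have hmaj := Summable.tsum_le_tsum_of_inj (f := fun j : ↑((↑F : Set ℕ)ᶜ) => |D ↑j|)
      (g := fun i : ℕ => (1/2 : ℝ) ^ (m0 + 3) * ((a (k m0) : ℝ))⁻¹ * (1/2 : ℝ) ^ i)
      (fun j => (j : ℕ) - (m0 + 1))
      (by
        intro j1 j2 h12
        simp only at h12
        have h1 := hcompl _ j1.2
        have h2 := hcompl _ j2.2
        exact Subtype.ext (by omega))
      (by intro c _; have := h.apos (k m0); positivity)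
      (by
        intro j
        have hge := hcompl _ j.2
        have hDle : |D (j : ℕ)| ≤ ((a (k (j : ℕ)) : ℝ))⁻¹ := by
          have ht1 := tm_nonneg (a := a) (k := k) S (j : ℕ)
          have ht2 := tm_nonneg (a := a) (k := k) S' (j : ℕ)
          have ht3 := tm_le_inv (a := a) (k := k) S (j : ℕ)
          have ht4 := tm_le_inv (a := a) (k := k) S' (j : ℕ)
          rw [hD, abs_sub_le_iff]
          constructor <;> linarith
        refine hDle.trans ?_
        have hchain := inv_ratio_le h (show m0 ≤ (j : ℕ) by omega)
        refine hchain.trans ?_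
        show (1/2 : ℝ) ^ (k (j:ℕ) - k m0) * ((a (k m0) : ℝ))⁻¹
          ≤ (1/2 : ℝ) ^ (m0 + 3) * ((a (k m0) : ℝ))⁻¹ * (1/2 : ℝ) ^ ((j : ℕ) - (m0 + 1))
        rw [mul_right_comm, ← pow_add]
        have hexp : m0 + 3 + ((j : ℕ) - (m0 + 1)) ≤ k (j:ℕ) - k m0 := by
          have hg1 := h.kgap m0
          have hg2 := h.kadd (m0 + 1) ((j : ℕ) - (m0 + 1))
          rw [show m0 + 1 + ((j : ℕ) - (m0 + 1)) = (j : ℕ) by omega] at hg2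
          omega
        have hinvpos : (0:ℝ) ≤ ((a (k m0) : ℝ))⁻¹ := by
          have := h.apos (k m0); positivity
        exact mul_le_mul_of_nonneg_right
          (pow_le_pow_of_le_one (by norm_num) (by norm_num) hexp) hinvpos)
      ((hDsum.abs.subtype _)) hgsum
    refine hmaj.trans ?_
    rw [tsum_mul_left, tsum_geometric_two]
    have hinvpos : (0:ℝ) ≤ ((a (k m0) : ℝ))⁻¹ := by
      have := h.apos (k m0); positivity
    have : (1/2 : ℝ) ^ (m0 + 3) * 2 ≤ 1/2 := by
      have : (1/2 : ℝ) ^ (m0 + 3) ≤ (1/2 : ℝ) ^ 3 :=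
        pow_le_pow_of_le_one (by norm_num) (by norm_num) (by omega)
      nlinarith
    nlinarith
  -- contradiction
  have hzero : D m0 + R = 0 := by rw [← hsum0]; rw [hsplit]; exact htsum
  have h1 : |D m0| = |R| := by
    have : D m0 = -R := by linarith
    rw [this, abs_neg]
  have hpos : (0:ℝ) < ((a (k m0) : ℝ))⁻¹ := by
    have := h.apos (k m0); positivity
  rw [hDm0] at h1
  linarith [hRle, h1]

lemma xv_addcircle_injective (h : Good a k) :
    Function.Injective (fun S : Set ℕ => ((xv a k S : ℝ) : AddCircle (1:ℝ))) := by
  intro S S' heq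
  by_contra hne
  have hreal := xv_real_injective h hne
  simp only at heq
  have h0 : ((xv a k S - xv a k S' : ℝ) : AddCircle (1:ℝ)) = 0 := by
    rw [QuotientAddGroup.mk_sub, heq, sub_self]
  rw [AddCircle.coe_eq_zero_iff] at h0
  obtain ⟨z, hz⟩ := h0
  have hz' : (z : ℝ) = xv a k S - xv a k S' := by
    rw [← hz, zsmul_eq_mul, mul_one]
  have hb1 := xv_nonneg (a := a) (k := k) S
  have hb2 := xv_nonneg (a := a) (k := k) S'
  have hb3 := xv_le_half h S
  have hb4 := xv_le_half h S'
  have hzabs : |(z : ℝ)| < 1 := by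
    rw [hz', abs_sub_lt_iff]
    constructor <;> linarith
  have hz0 : z = 0 := by
    have h1 : |z| < 1 := by exact_mod_cast (by rwa [← Int.cast_abs] at hzabs : ((|z| : ℤ) : ℝ) < 1)
    rwa [Int.abs_lt_one_iff] at h1
  rw [hz0] at hz'
  simp at hz'
  exact hreal (by linarith)

end injectivity

section arith

lemma arith_pos {a : ℕ → ℕ} (ha : IsArith a) (n : ℕ) : 0 < a n := by
  have h0 : 0 < a 0 := by rw [ha.1]; norm_num
  rcases Nat.eq_zero_or_pos n with h | h
  · rwa [h]
  · exact lt_of_lt_of_le h0 (ha.2.1.monotone (Nat.zero_le n))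

lemma arith_pow {a : ℕ → ℕ} (ha : IsArith a) (n : ℕ) : 2 ^ n ≤ a n := by
  induction n with
  | zero => simp [ha.1]
  | succ n ih =>
    have := ha.2.2.2 n
    calc 2 ^ (n + 1) = 2 * 2 ^ n := by ring
    _ ≤ 2 * a n := by omega
    _ ≤ a (n + 1) := this

lemma arith_dvd {a : ℕ → ℕ} (ha : IsArith a) (i j : ℕ) (hij : i ≤ j) : a i ∣ a j := by
  obtain ⟨d, rfl⟩ := Nat.exists_eq_add_of_le hij
  clear hij
  induction d with
  | zero => exact dvd_refl _
  | succ d ih => exact dvd_trans ih (ha.2.2.1 (i + d))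

lemma arith_ratio {a : ℕ → ℕ} (ha : IsArith a) (i j : ℕ) (hij : i ≤ j) :
    2 ^ (j - i) * a i ≤ a j := by
  obtain ⟨d, rfl⟩ := Nat.exists_eq_add_of_le hij
  rw [show i + d - i = d by omega]
  clear hij
  induction d with
  | zero => simp
  | succ d ih =>
    have h2 := ha.2.2.2 (i + d)
    calc 2 ^ (d + 1) * a i = 2 * (2 ^ d * a i) := by ring
    _ ≤ 2 * a (i + d) := by omega
    _ ≤ a (i + d + 1) := h2
    _ = a (i + (d + 1)) := by rw [Nat.add_assoc]

end arith


theorem stmt13 (f : ℝ → ℝ) (hf : IsUnboundedModulus f) (g : ℕ → ℝ) (hg : IsWeight g)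
    (a : ℕ → ℕ) (ha : IsArith a) :
    Cardinal.mk ↥(statChar f g (fun n => (a n : ℤ))) = Cardinal.continuum := by
  -- construct the sparse sequence k
  have hfg : Tendsto (fun n : ℕ => f (g n)) atTop atTop := hf.2.comp hg.2.1
  have hNex : ∀ m : ℕ, ∃ N : ℕ, ∀ n ≥ N, (m : ℝ) * f ((((m + 2) ^ 2 : ℕ)) : ℝ) ≤ f (g n) :=
    fun m => eventually_atTop.mp (hfg.eventually_ge_atTop _)
  choose N hN using hNex
  set k : ℕ → ℕ := fun m => Nat.rec (N 0 + 2) (fun m km => max (N (m + 1)) km + m + 3) m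
    with hk
  have hk0 : k 0 = N 0 + 2 := rfl
  have hksucc : ∀ m, k (m + 1) = max (N (m + 1)) (k m) + m + 3 := fun m => rfl
  have hGood : Good a k := by
    refine ⟨arith_pos ha, arith_pow ha, arith_dvd ha, arith_ratio ha, ?_, ?_⟩
    · rw [hk0]; omega
    · intro m
      rw [hksucc m]
      have := le_max_right (N (m + 1)) (k m)
      omega
  have hkN : ∀ m, N m ≤ k m := by
    intro m
    cases m with
    | zero => rw [hk0]; omega
    | succ m =>
      rw [hksucc m]
      have := le_max_left (N (m + 1)) (k m)
      omega
  have hcond : ∀ m n : ℕ, k m ≤ n → (m : ℝ) * f ((((m + 2) ^ 2 : ℕ)) : ℝ) ≤ f (g n) :=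
    fun m n hn => hN m n (le_trans (hkN m) hn)
  -- the injection
  set φ : Set ℕ → ↥(statChar f g (fun n => (a n : ℤ))) :=
    fun S => ⟨((xv a k S : ℝ) : AddCircle (1:ℝ)), mem_statChar_xv f hf g hg hGood hcond S⟩
    with hφ
  have hφinj : Function.Injective φ := by
    intro S S' hSS
    exact xv_addcircle_injective hGood (congrArg Subtype.val hSS)
  apply le_antisymm
  · calc Cardinal.mk ↥(statChar f g (fun n => (a n : ℤ)))
        ≤ Cardinal.mk (AddCircle (1:ℝ)) := Cardinal.mk_subtype_le _
      _ ≤ Cardinal.mk ℝ := Cardinal.mk_le_of_surjective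
          (Quotient.mk''_surjective : Function.Surjective ((↑) : ℝ → AddCircle (1:ℝ)))
      _ = Cardinal.continuum := Cardinal.mk_real
  · calc Cardinal.continuum = 2 ^ Cardinal.aleph0 := Cardinal.two_power_aleph0.symm
      _ = Cardinal.mk (Set ℕ) := by rw [Cardinal.mk_set, Cardinal.mk_nat]
      _ ≤ Cardinal.mk ↥(statChar f g (fun n => (a n : ℤ))) := Cardinal.mk_le_of_injective hφinj
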